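/- Let k ≥ 2 be an integer and let i, j be integers with 0 ≤ i ≤ k and 0 ≤ j ≤ k. Then sin(π(i+1)/(k+2)) · sin(π(j+1)/(k+2)) = sin(π/(k+2)) · Σ_{c ∈ S(i,j,k)} sin(π(c+1)/(k+2)). -/

import Mathlib

open Real Finset

/-- For integers `k ≥ 2` and `0 ≤ i, j ≤ k`, the quantum-dimension multiplicativity
identity: `sin(π(i+1)/(k+2)) · sin(π(j+1)/(k+2)) = sin(π/(k+2)) · Σ_{c ∈ S(i,j,k)}
sin(π(c+1)/(k+2))`, where `S(i,j,k)` is the set of integers `c` with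
`|i−j| ≤ c ≤ i+j`, `i+j+c` even, and `i+j+c ≤ 2k`. -/
theorem stmt_0 (k i j : ℤ) (hk : 2 ≤ k) (hi0 : 0 ≤ i) (hik : i ≤ k)
    (hj0 : 0 ≤ j) (hjk : j ≤ k) :
    Real.sin (π * (i + 1) / (k + 2)) * Real.sin (π * (j + 1) / (k + 2)) =
      Real.sin (π / (k + 2)) *
        ∑ c ∈ (Finset.Icc (|i - j|) (i + j)).filter
            (fun c => Even (i + j + c) ∧ i + j + c ≤ 2 * k),
          Real.sin (π * (c + 1) / (k + 2)) := by
  set θ : ℝ := π / (k + 2) with hθ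
  set d : ℤ := |i - j| with hd
  set m : ℤ := min (i + j) (2 * k - i - j) with hm
  have hdabs : d = i - j ∨ d = j - i := by
    rcases abs_cases (i - j) with ⟨h, _⟩ | ⟨h, _⟩
    · left; omega
    · right; omega
  have hmcases : m = i + j ∨ m = 2 * k - i - j := by
    rcases min_cases (i + j) (2 * k - i - j) with ⟨h, _⟩ | ⟨h, _⟩ <;> [left; right] <;> omega
  have hmle1 : m ≤ i + j := min_le_left _ _
  have hmle2 : m ≤ 2 * k - i - j := min_le_right _ _
  clear_value d m
  have hdm : d ≤ m := by rcases hdabs with h | h <;> rcases hmcases with h' | h' <;> omega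
  have hpar : (m - d) % 2 = 0 := by rcases hdabs with h | h <;> rcases hmcases with h' | h' <;> omega
  set N : ℕ := ((m - d) / 2 + 1).toNat with hN
  have h2N : 2 * (N : ℤ) = m - d + 2 := by omega
  have hset : (Finset.Icc d (i + j)).filter
      (fun c => Even (i + j + c) ∧ i + j + c ≤ 2 * k)
      = (Finset.range N).image (fun t : ℕ => d + 2 * (t : ℤ)) := by
    ext c
    simp only [Finset.mem_filter, Finset.mem_Icc, Finset.mem_image, Finset.mem_range,
      Int.even_iff]
    constructor
    · rintro ⟨⟨h1, h2⟩, h3, h4⟩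
      refine ⟨((c - d) / 2).toNat, ?_, ?_⟩ <;> rcases hdabs with h | h <;> rcases hmcases with h' | h' <;> omega
    · rintro ⟨t, ht, rfl⟩
      rcases hdabs with h | h <;> rcases hmcases with h' | h' <;> omega
  rw [hset, Finset.sum_image (by intro a _ b _ h; have h' : d + 2 * (a : ℤ) = d + 2 * (b : ℤ) := h; omega)]
  -- rewrite each term π * (x+1)/(k+2) = (x+1) * θ
  have hterm : ∀ x : ℝ, π * (x + 1) / (k + 2) = (x + 1) * θ := by
    intro x; rw [hθ]; ring
  have key : ∀ x : ℝ, Real.sin θ * Real.sin ((x + 1) * θ)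
      = (Real.cos (x * θ) - Real.cos ((x + 2) * θ)) / 2 := by
    intro x
    have h := Real.cos_sub_cos (x * θ) ((x + 2) * θ)
    have e1 : (x * θ + (x + 2) * θ) / 2 = (x + 1) * θ := by ring
    have e2 : (x * θ - (x + 2) * θ) / 2 = -θ := by ring
    rw [e1, e2, Real.sin_neg] at h
    linear_combination (-1 / 2) * h
  have hsum : Real.sin θ *
      ∑ t ∈ Finset.range N, Real.sin (π * ((d : ℝ) + 2 * (t : ℕ) + 1) / (k + 2))
      = Real.cos ((d : ℝ) * θ) / 2 - Real.cos (((m : ℝ) + 2) * θ) / 2 := by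
    rw [Finset.mul_sum]
    have : ∀ t ∈ Finset.range N,
        Real.sin θ * Real.sin (π * ((d : ℝ) + 2 * (t : ℕ) + 1) / (k + 2))
        = (fun t : ℕ => Real.cos (((d : ℝ) + 2 * t) * θ) / 2) t
          - (fun t : ℕ => Real.cos (((d : ℝ) + 2 * t) * θ) / 2) (t + 1) := by
      intro t _
      simp only
      rw [hterm, key ((d : ℝ) + 2 * t)]
      push_cast
      ring_nf
    rw [Finset.sum_congr rfl this, Finset.sum_range_sub']
    have hcast : ((d : ℝ) + 2 * (N : ℕ)) = (m : ℝ) + 2 := by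
      have hq : d + 2 * (N : ℤ) = m + 2 := by omega
      exact_mod_cast hq
    rw [hcast]
    norm_num
  -- now LHS
  rw [hterm ((i : ℝ)), hterm ((j : ℝ))]
  push_cast
  rw [hsum]
  -- LHS product to sum
  have h := Real.cos_sub_cos (((i : ℝ) - j) * θ) (((i : ℝ) + j + 2) * θ)
  have e1 : ((((i : ℝ) - j) * θ) + (((i : ℝ) + j + 2) * θ)) / 2 = ((i : ℝ) + 1) * θ := by ring
  have e2 : ((((i : ℝ) - j) * θ) - (((i : ℝ) + j + 2) * θ)) / 2 = -(((j : ℝ) + 1) * θ) := by ring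
  rw [e1, e2, Real.sin_neg] at h
  have hcosd : Real.cos ((d : ℝ) * θ) = Real.cos (((i : ℝ) - j) * θ) := by
    rcases hdabs with hh | hh
    · rw [hh]; push_cast; ring_nf
    · rw [hh]
      push_cast
      rw [show ((j : ℝ) - i) * θ = -(((i : ℝ) - j) * θ) by ring, Real.cos_neg]
  have hcosm : Real.cos (((m : ℝ) + 2) * θ) = Real.cos (((i : ℝ) + j + 2) * θ) := by
    rcases hmcases with h' | h'
    · rw [h']; push_cast; ring_nf
    · rw [h']
      have hk0 : ((k : ℝ) + 2) ≠ 0 := by positivity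
      have harg : (((2 * k - i - j : ℤ) : ℝ) + 2) * θ = 2 * π - ((i : ℝ) + j + 2) * θ := by
        rw [hθ]
        push_cast
        field_simp
        ring
      rw [harg, Real.cos_sub]
      simp
  rw [hcosd, hcosm]
  linear_combination (-1 / 2) * h
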